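/- arXiv:1803.02602 — 2 statements merged into one kernel-verified Lean document; each statement's English description precedes it below -/
import Mathlib

section
/- Let Θ be a U → ℓ2 ε-subspace embedding for U_r = range(U_r matrix), and let the columns of U_r be orthonormal with respect to ⟨x,y⟩_U^Θ = ⟨Θx, Θy⟩. Then the condition number of A_r(μ) = U_r^H Θ^H Θ R_U^{-1} A(μ) U_r is bounded by √((1+ε)/(1−ε)) · β_r^Θ(μ)/α_r^Θ(μ). -/
open Matrix BigOperators

noncomputable section

/-- Inner product induced by `R`: `⟨x,y⟩_U = ⟨R x, y⟩`. -/
def ipR {n : ℕ} (R : Matrix (Fin n) (Fin n) ℝ) (x y : Fin n → ℝ) : ℝ :=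
  R.mulVec x ⬝ᵥ y

/-- Norm induced by `R`. -/
def normR {n : ℕ} (R : Matrix (Fin n) (Fin n) ℝ) (x : Fin n → ℝ) : ℝ :=
  Real.sqrt (ipR R x x)

/-- Euclidean norm. -/
def norm2 {m : ℕ} (v : Fin m → ℝ) : ℝ :=
  Real.sqrt (v ⬝ᵥ v)

/-- Dual norm `‖y‖_{U'}` induced by `⟨·, R⁻¹ ·⟩`. -/
def normDual {n : ℕ} (R : Matrix (Fin n) (Fin n) ℝ) (y : Fin n → ℝ) : ℝ :=
  Real.sqrt (y ⬝ᵥ R⁻¹.mulVec y)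

/-- Dual seminorm `‖y‖_{Z'} = sup_{w ∈ Z, w ≠ 0} |⟨y,w⟩|/‖w‖_U`. -/
def dualSemi {n : ℕ} (R : Matrix (Fin n) (Fin n) ℝ) (Z : Submodule ℝ (Fin n → ℝ))
    (y : Fin n → ℝ) : ℝ :=
  ⨆ w : Z, |y ⬝ᵥ (w : Fin n → ℝ)| / normR R (w : Fin n → ℝ)

/-- Sketched dual seminorm `‖y‖_{Z'}^Θ = sup_{w ∈ Z, w ≠ 0} |⟨Θ R⁻¹ y, Θ w⟩|/‖Θ w‖`. -/
def skDualSemi {n k : ℕ} (R : Matrix (Fin n) (Fin n) ℝ) (Θ : Matrix (Fin k) (Fin n) ℝ)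
    (Z : Submodule ℝ (Fin n → ℝ)) (y : Fin n → ℝ) : ℝ :=
  ⨆ w : Z, |(Θ.mulVec (R⁻¹.mulVec y)) ⬝ᵥ (Θ.mulVec (w : Fin n → ℝ))| /
      norm2 (Θ.mulVec (w : Fin n → ℝ))

/-- `i`-th column of a matrix as a vector. -/
def colV {n m : ℕ} (M : Matrix (Fin n) (Fin m) ℝ) (i : Fin m) : Fin n → ℝ :=
  fun j => M j i

/-- Squared Frobenius norm. -/
def frob2 {a b : ℕ} (M : Matrix (Fin a) (Fin b) ℝ) : ℝ :=
  ∑ i, ∑ j, (M i j) ^ 2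

/-! Auxiliary lemmas. -/

lemma dot_self_nonneg' {m : ℕ} (v : Fin m → ℝ) : 0 ≤ v ⬝ᵥ v :=
  Finset.sum_nonneg fun _ _ => mul_self_nonneg _

lemma norm2_nonneg' {m : ℕ} (v : Fin m → ℝ) : 0 ≤ norm2 v := Real.sqrt_nonneg _

lemma abs_dot_le {m : ℕ} (v b : Fin m → ℝ) : |v ⬝ᵥ b| ≤ norm2 v * norm2 b := by
  have h := Finset.sum_mul_sq_le_sq_mul_sq Finset.univ v b
  have h2 : (v ⬝ᵥ b) ^ 2 ≤ (v ⬝ᵥ v) * (b ⬝ᵥ b) := by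
    simpa [dotProduct, sq] using h
  calc |v ⬝ᵥ b| = Real.sqrt ((v ⬝ᵥ b) ^ 2) := (Real.sqrt_sq_eq_abs _).symm
    _ ≤ Real.sqrt ((v ⬝ᵥ v) * (b ⬝ᵥ b)) := Real.sqrt_le_sqrt h2
    _ = norm2 v * norm2 b := Real.sqrt_mul (dot_self_nonneg' v) _

lemma dot_self_pos {m : ℕ} {a : Fin m → ℝ} (ha : a ≠ 0) : 0 < a ⬝ᵥ a := by
  rcases Function.ne_iff.1 ha with ⟨i, hi⟩
  exact Finset.sum_pos' (fun j _ => mul_self_nonneg _)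
    ⟨i, Finset.mem_univ i, mul_self_pos.2 (by simpa using hi)⟩

section key
variable {n k r : ℕ} (R : Matrix (Fin n) (Fin n) ℝ) (Θ : Matrix (Fin k) (Fin n) ℝ)
  (U : Matrix (Fin n) (Fin r) ℝ)
  (hortho : ∀ i j : Fin r,
      (Θ.mulVec (colV U i)) ⬝ᵥ (Θ.mulVec (colV U j)) = if i = j then 1 else 0)

include hortho

lemma gram_eq_one : (Θ * U)ᵀ * (Θ * U) = 1 := by
  ext i j
  have h := hortho i j
  simpa [Matrix.mul_apply, dotProduct, mulVec, colV, Matrix.one_apply, mul_comm] using h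

lemma sketch_dot_eq (b : Fin r → ℝ) :
    (Θ *ᵥ (U *ᵥ b)) ⬝ᵥ (Θ *ᵥ (U *ᵥ b)) = b ⬝ᵥ b := by
  rw [mulVec_mulVec, dotProduct_mulVec, vecMul_mulVec, gram_eq_one Θ U hortho,
    Matrix.vecMul_one]

lemma sketch_norm_eq (b : Fin r → ℝ) : norm2 (Θ *ᵥ (U *ᵥ b)) = norm2 b := by
  unfold norm2; rw [sketch_dot_eq Θ U hortho]

lemma skDual_eq (R : Matrix (Fin n) (Fin n) ℝ) (y : Fin n → ℝ) :
    skDualSemi R Θ (LinearMap.range U.mulVecLin) y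
      = norm2 ((Uᵀ * Θᵀ) *ᵥ (Θ *ᵥ (R⁻¹ *ᵥ y))) := by
  set p : Fin k → ℝ := Θ *ᵥ (R⁻¹ *ᵥ y) with hp
  set v : Fin r → ℝ := (Uᵀ * Θᵀ) *ᵥ p with hv
  have key1 : ∀ b : Fin r → ℝ, p ⬝ᵥ (Θ *ᵥ (U *ᵥ b)) = v ⬝ᵥ b := by
    intro b
    rw [mulVec_mulVec, dotProduct_mulVec, ← mulVec_transpose, transpose_mul, hv]
  set Z := LinearMap.range U.mulVecLin with hZ
  haveI : Nonempty Z := ⟨⟨0, Z.zero_mem⟩⟩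
  have hub : ∀ w : Z,
      |p ⬝ᵥ (Θ *ᵥ (w : Fin n → ℝ))| / norm2 (Θ *ᵥ (w : Fin n → ℝ)) ≤ norm2 v := by
    rintro ⟨w, hw⟩
    obtain ⟨b, hb⟩ := hw
    simp only [Matrix.mulVecLin_apply] at hb
    dsimp only
    rw [← hb, key1, sketch_norm_eq Θ U hortho]
    rcases eq_or_lt_of_le (norm2_nonneg' b) with h0 | h0
    · rw [← h0, div_zero]; exact norm2_nonneg' v
    · rw [div_le_iff₀ h0]; exact abs_dot_le v b
  have hmem : U *ᵥ v ∈ Z := ⟨v, by simp [Matrix.mulVecLin_apply]⟩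
  have hatt : |p ⬝ᵥ (Θ *ᵥ (U *ᵥ v))| / norm2 (Θ *ᵥ (U *ᵥ v)) = norm2 v := by
    rw [key1, sketch_norm_eq Θ U hortho, abs_of_nonneg (dot_self_nonneg' v)]
    unfold norm2
    exact Real.div_sqrt
  have hbdd : BddAbove (Set.range fun w : Z =>
      |p ⬝ᵥ (Θ *ᵥ (w : Fin n → ℝ))| / norm2 (Θ *ᵥ (w : Fin n → ℝ))) := by
    refine ⟨norm2 v, ?_⟩
    rintro x ⟨w, rfl⟩
    exact hub w
  unfold skDualSemi
  refine le_antisymm (ciSup_le hub) ?_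
  have := le_ciSup hbdd (⟨U *ᵥ v, hmem⟩ : Z)
  rwa [hatt] at this

end key

/-- Conditioning of the sketched reduced matrix `A_r = Uᵀ Θᵀ Θ R⁻¹ A U` when the columns
of `U` are orthonormal with respect to `⟨Θ·,Θ·⟩`: all its singular values lie in
`[α^Θ/√(1+ε), β^Θ/√(1-ε)]`, so its condition number is bounded by
`√((1+ε)/(1-ε))·β^Θ/α^Θ`. -/
theorem sketched_reduced_matrix_conditioning {n k r : ℕ}
    (R A : Matrix (Fin n) (Fin n) ℝ) (hR : R.PosDef)
    (Θ : Matrix (Fin k) (Fin n) ℝ) (b u : Fin n → ℝ) (hu : A.mulVec u = b)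
    (U : Matrix (Fin n) (Fin r) ℝ)
    (hortho : ∀ i j : Fin r,
      (Θ.mulVec (colV U i)) ⬝ᵥ (Θ.mulVec (colV U j)) = if i = j then 1 else 0)
    (ε α β : ℝ) (hε0 : 0 ≤ ε) (hε1 : ε < 1)
    (hemb : ∀ x ∈ LinearMap.range U.mulVecLin, ∀ y ∈ LinearMap.range U.mulVecLin,
      |ipR R x y - (Θ.mulVec x) ⬝ᵥ (Θ.mulVec y)| ≤ ε * normR R x * normR R y)
    (hα : ∀ x ∈ LinearMap.range U.mulVecLin,
      α * normR R x ≤ skDualSemi R Θ (LinearMap.range U.mulVecLin) (A.mulVec x))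
    (hβ : ∀ x ∈ Submodule.span ℝ {u} ⊔ LinearMap.range U.mulVecLin,
      skDualSemi R Θ (LinearMap.range U.mulVecLin) (A.mulVec x) ≤ β * normR R x) :
    ∀ a : Fin r → ℝ,
      (1 / Real.sqrt (1 + ε)) * α * norm2 a ≤
        norm2 ((Uᵀ * Θᵀ * Θ * R⁻¹ * A * U).mulVec a) ∧
      norm2 ((Uᵀ * Θᵀ * Θ * R⁻¹ * A * U).mulVec a) ≤
        (1 / Real.sqrt (1 - ε)) * β * norm2 a := by
  intro a
  by_cases ha : a = 0
  · subst ha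
    constructor <;> simp [norm2]
  -- set-up
  have hxZ : U *ᵥ a ∈ LinearMap.range U.mulVecLin := ⟨a, by simp [Matrix.mulVecLin_apply]⟩
  set x : Fin n → ℝ := U *ᵥ a with hxdef
  -- positivity of the R-inner product
  have ht0 : 0 ≤ ipR R x x := by
    rcases eq_or_ne x 0 with h | h
    · simp [ipR, h]
    · have := hR.dotProduct_mulVec_pos h
      have hst : star x = x := rfl
      rw [hst] at this
      have : 0 < x ⬝ᵥ R *ᵥ x := this
      rw [ipR, dotProduct_comm]
      exact this.le
  have hnx : normR R x * normR R x = ipR R x x := Real.mul_self_sqrt ht0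
  have hΘx : (Θ *ᵥ x) ⬝ᵥ (Θ *ᵥ x) = a ⬝ᵥ a := sketch_dot_eq Θ U hortho a
  have hembx := hemb x hxZ x hxZ
  rw [ipR] at hembx
  have hembx' : |ipR R x x - a ⬝ᵥ a| ≤ ε * (normR R x * normR R x) := by
    have : R *ᵥ x ⬝ᵥ x = ipR R x x := rfl
    rw [this, hΘx] at hembx
    linarith [hembx, mul_assoc ε (normR R x) (normR R x)]
  rw [hnx] at hembx'
  set t := ipR R x x with htdef
  set s := a ⬝ᵥ a with hsdef
  have habs := abs_le.1 hembx'
  have h1 : s ≤ (1 + ε) * t := by nlinarith [habs.1, habs.2]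
  have h2 : (1 - ε) * t ≤ s := by nlinarith [habs.1, habs.2]
  have hs : 0 < s := dot_self_pos ha
  have htpos : 0 < t := by nlinarith
  have hnRx : 0 < normR R x := Real.sqrt_pos.2 htpos
  have hc1 : (0:ℝ) < Real.sqrt (1 + ε) := Real.sqrt_pos.2 (by linarith)
  have hc2 : (0:ℝ) < Real.sqrt (1 - ε) := Real.sqrt_pos.2 (by linarith)
  have hna : norm2 a ≤ Real.sqrt (1 + ε) * normR R x := by
    have : norm2 a ≤ Real.sqrt ((1 + ε) * t) := Real.sqrt_le_sqrt h1
    rwa [Real.sqrt_mul (by linarith : (0:ℝ) ≤ 1 + ε)] at this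
  have hxn : Real.sqrt (1 - ε) * normR R x ≤ norm2 a := by
    have : Real.sqrt ((1 - ε) * t) ≤ norm2 a := Real.sqrt_le_sqrt h2
    rwa [Real.sqrt_mul (by linarith : (0:ℝ) ≤ 1 - ε)] at this
  -- the key identity
  have hAr : (Uᵀ * Θᵀ * Θ * R⁻¹ * A * U) *ᵥ a
      = (Uᵀ * Θᵀ) *ᵥ (Θ *ᵥ (R⁻¹ *ᵥ (A *ᵥ x))) := by
    simp only [hxdef, mulVec_mulVec, Matrix.mul_assoc]
  have hsk : skDualSemi R Θ (LinearMap.range U.mulVecLin) (A *ᵥ x)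
      = norm2 ((Uᵀ * Θᵀ * Θ * R⁻¹ * A * U) *ᵥ a) := by
    rw [skDual_eq Θ U hortho R, hAr]
  have hαx := hα x hxZ
  have hβx := hβ x (Submodule.mem_sup_right hxZ)
  rw [hsk] at hαx hβx
  have hN0 : 0 ≤ norm2 ((Uᵀ * Θᵀ * Θ * R⁻¹ * A * U) *ᵥ a) := norm2_nonneg' _
  have hβ0 : 0 ≤ β := by nlinarith
  constructor
  · rcases le_or_gt α 0 with h | h
    · have hle : (1 / Real.sqrt (1 + ε)) * α * norm2 a ≤ 0 := by
        have hna0 := norm2_nonneg' a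
        have h1c : (0:ℝ) < 1 / Real.sqrt (1 + ε) := by positivity
        have h3 : α * norm2 a ≤ 0 := mul_nonpos_iff.2 (Or.inr ⟨h, hna0⟩)
        rw [mul_assoc]
        exact mul_nonpos_iff.2 (Or.inl ⟨h1c.le, h3⟩)
      exact hle.trans hN0
    · have step : (1 / Real.sqrt (1 + ε)) * α * norm2 a ≤ α * normR R x := by
        rw [div_mul_eq_mul_div, div_mul_eq_mul_div, div_le_iff₀ hc1]
        calc 1 * α * norm2 a = α * norm2 a := by ring
          _ ≤ α * (Real.sqrt (1 + ε) * normR R x) :=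
            mul_le_mul_of_nonneg_left hna h.le
          _ = α * normR R x * Real.sqrt (1 + ε) := by ring
      exact step.trans hαx
  · have hxle : normR R x ≤ norm2 a / Real.sqrt (1 - ε) := by
      rw [le_div_iff₀ hc2, mul_comm]
      exact hxn
    calc norm2 ((Uᵀ * Θᵀ * Θ * R⁻¹ * A * U) *ᵥ a) ≤ β * normR R x := hβx
      _ ≤ β * (norm2 a / Real.sqrt (1 - ε)) := mul_le_mul_of_nonneg_left hxle hβ0
      _ = (1 / Real.sqrt (1 - ε)) * β * norm2 a := by ring
end
end

section
/- Let u solve A u = b, u^du solve A^H u^du = −l, with approximations u_r and u_r^du. Define the sketched primal-dual output s_r^{spd} = ⟨l, u_r⟩ − ⟨Θ u_r^du, Θ R_U^{-1} r(u_r)⟩, where r(u_r) = b − A u_r. If Θ is a U → ℓ2 ε-subspace embedding for span{u_r^du, R_U^{-1} r(u_r)}, and η > 0 satisfies η ≤ min_{x≠0} ‖A x‖_{U'}/‖x‖_U, then |⟨l,u⟩ − s_r^{spd}| ≤ (‖r(u_r)‖_{U'}/η) · ((1+ε)‖r^du(u_r^du)‖_{U'} + ε‖l‖_{U'}), where r^du(u_r^du)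 = −l − A^H u_r^du. -/
open Matrix BigOperators

noncomputable section

variable {n : ℕ}

lemma dotmm (M N : Matrix (Fin n) (Fin n) ℝ) (z w : Fin n → ℝ) :
    (M *ᵥ z) ⬝ᵥ (N *ᵥ w) = ((Nᵀ * M) *ᵥ z) ⬝ᵥ w := by
  rw [dotProduct_mulVec, ← mulVec_transpose, mulVec_mulVec]

lemma ipR_self_nonneg (R : Matrix (Fin n) (Fin n) ℝ) (hR : R.PosDef) (x : Fin n → ℝ) :
    0 ≤ ipR R x x := by
  have h := hR.posSemidef.dotProduct_mulVec_nonneg x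
  simpa [ipR, dotProduct_comm] using h

lemma ipR_comm (R : Matrix (Fin n) (Fin n) ℝ) (hR : Rᵀ = R) (x y : Fin n → ℝ) :
    ipR R x y = ipR R y x := by
  unfold ipR
  rw [dotProduct_comm, dotProduct_mulVec, ← mulVec_transpose, hR]

lemma ipR_expand (R : Matrix (Fin n) (Fin n) ℝ) (hR : Rᵀ = R) (x y : Fin n → ℝ) (t : ℝ) :
    ipR R (x + t • y) (x + t • y)
      = ipR R x x + 2 * t * ipR R x y + t * t * ipR R y y := by
  have h := ipR_comm R hR x y
  simp only [ipR, mulVec_add, mulVec_smul, add_dotProduct, dotProduct_add,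
    smul_dotProduct, dotProduct_smul, smul_eq_mul] at *
  linear_combination (-t) * h

lemma normR_nonneg (R : Matrix (Fin n) (Fin n) ℝ) (x : Fin n → ℝ) : 0 ≤ normR R x :=
  Real.sqrt_nonneg _

lemma normR_sq (R : Matrix (Fin n) (Fin n) ℝ) (hR : R.PosDef) (x : Fin n → ℝ) :
    normR R x * normR R x = ipR R x x :=
  Real.mul_self_sqrt (ipR_self_nonneg R hR x)

lemma ipR_CS (R : Matrix (Fin n) (Fin n) ℝ) (hR : R.PosDef) (x y : Fin n → ℝ) :
    |ipR R x y| ≤ normR R x * normR R y := by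
  have key : ipR R x y ^ 2 ≤ ipR R x x * ipR R y y := by
    have hq : ∀ t : ℝ, 0 ≤ ipR R y y * (t * t) + (2 * ipR R x y) * t + ipR R x x := by
      intro t
      have h := ipR_self_nonneg R hR (x + t • y)
      rw [ipR_expand R hR.isHermitian x y t] at h
      linarith
    have hd := discrim_le_zero hq
    unfold discrim at hd
    nlinarith
  calc |ipR R x y| = Real.sqrt ((ipR R x y) ^ 2) := (Real.sqrt_sq_eq_abs _).symm
    _ ≤ Real.sqrt (ipR R x x * ipR R y y) := Real.sqrt_le_sqrt key
    _ = normR R x * normR R y := by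
        rw [Real.sqrt_mul (ipR_self_nonneg R hR x)]; rfl

lemma normR_add_le (R : Matrix (Fin n) (Fin n) ℝ) (hR : R.PosDef) (x y : Fin n → ℝ) :
    normR R (x + y) ≤ normR R x + normR R y := by
  have hexp := ipR_expand R hR.isHermitian x y 1
  rw [one_smul] at hexp
  have hcs := ipR_CS R hR x y
  have h1 : ipR R (x + y) (x + y) ≤ (normR R x + normR R y) ^ 2 := by
    have := normR_sq R hR x
    have := normR_sq R hR y
    have := abs_le.mp hcs
    nlinarith
  calc normR R (x + y) = Real.sqrt (ipR R (x+y) (x+y)) := rfl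
    _ ≤ Real.sqrt ((normR R x + normR R y) ^ 2) := Real.sqrt_le_sqrt h1
    _ = |normR R x + normR R y| := Real.sqrt_sq_eq_abs _
    _ = normR R x + normR R y := abs_of_nonneg (add_nonneg (normR_nonneg R x) (normR_nonneg R y))

lemma normR_neg (R : Matrix (Fin n) (Fin n) ℝ) (x : Fin n → ℝ) :
    normR R (-x) = normR R x := by
  simp [normR, ipR, mulVec_neg]

section Dual
variable (R : Matrix (Fin n) (Fin n) ℝ)

lemma Rinv_symm (hR : R.PosDef) : R⁻¹ᵀ = R⁻¹ := by
  rw [transpose_nonsing_inv, ← conjTranspose_eq_transpose_of_trivial, hR.isHermitian.eq]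

lemma R_mul_inv (hR : R.PosDef) : R * R⁻¹ = 1 :=
  mul_nonsing_inv R ((isUnit_iff_isUnit_det R).mp hR.isUnit)

lemma R_inv_mul (hR : R.PosDef) : R⁻¹ * R = 1 :=
  nonsing_inv_mul R ((isUnit_iff_isUnit_det R).mp hR.isUnit)

/-- `‖y‖_{U'} = ‖R⁻¹ y‖_U`. -/
lemma normDual_eq (hR : R.PosDef) (y : Fin n → ℝ) : normDual R y = normR R (R⁻¹ *ᵥ y) := by
  unfold normDual normR ipR
  congr 1
  rw [mulVec_mulVec, R_mul_inv R hR, one_mulVec, dotProduct_comm]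

/-- pairing: `y ⬝ᵥ w = ⟨R⁻¹ y, w⟩_U`. -/
lemma pairing (hR : R.PosDef) (y w : Fin n → ℝ) : y ⬝ᵥ w = ipR R (R⁻¹ *ᵥ y) w := by
  unfold ipR
  rw [mulVec_mulVec, R_mul_inv R hR, one_mulVec]

lemma pairing_bound (hR : R.PosDef) (y w : Fin n → ℝ) :
    |y ⬝ᵥ w| ≤ normDual R y * normR R w := by
  rw [pairing R hR y w, normDual_eq R hR]
  exact ipR_CS R hR _ _

lemma normDual_nonneg (y : Fin n → ℝ) : 0 ≤ normDual R y := Real.sqrt_nonneg _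

lemma normDual_neg (hR : R.PosDef) (y : Fin n → ℝ) : normDual R (-y) = normDual R y := by
  rw [normDual_eq R hR, normDual_eq R hR, mulVec_neg, normR_neg]

lemma normDual_add_le (hR : R.PosDef) (x y : Fin n → ℝ) :
    normDual R (x + y) ≤ normDual R x + normDual R y := by
  rw [normDual_eq R hR, normDual_eq R hR, normDual_eq R hR, mulVec_add]
  exact normR_add_le R hR _ _

/-- transpose bound: the smallest singular value of `Aᵀ` dominates `η` too. -/
lemma transpose_min_bound (hR : R.PosDef) (A : Matrix (Fin n) (Fin n) ℝ) (hA : IsUnit A.det)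
    {η : ℝ} (hη : 0 < η)
    (hmin : ∀ x : Fin n → ℝ, η * normR R x ≤ normDual R (A *ᵥ x)) (z : Fin n → ℝ) :
    η * normR R z ≤ normDual R (Aᵀ *ᵥ z) := by
  set g : Fin n → ℝ := R⁻¹ *ᵥ (Aᵀ *ᵥ z) with hg
  set s : Fin n → ℝ := A⁻¹ *ᵥ (R *ᵥ z) with hs
  have hgoal : normDual R (Aᵀ *ᵥ z) = normR R g := normDual_eq R hR _
  -- key identity : ipR R s g = ipR R z z
  have hkey : ipR R s g = ipR R z z := by
    unfold ipR
    rw [hg, hs, mulVec_mulVec, mulVec_mulVec, mulVec_mulVec, dotmm]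
    congr 2
    rw [transpose_mul, transpose_transpose, Rinv_symm R hR]
    simp only [Matrix.mul_assoc]
    rw [nonsing_inv_mul_cancel_left R _ ((isUnit_iff_isUnit_det R).mp hR.isUnit),
      mul_nonsing_inv_cancel_left A _ hA]
  -- bound on s
  have hsb : η * normR R s ≤ normR R z := by
    have h := hmin s
    have hAs : A *ᵥ s = R *ᵥ z := by
      rw [hs, mulVec_mulVec, mulVec_mulVec, Matrix.mul_assoc,
        mul_nonsing_inv_cancel_left A _ hA]
    rw [hAs, normDual_eq R hR, mulVec_mulVec, R_inv_mul R hR, one_mulVec] at h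
    exact h
  -- conclude
  have hcs : |ipR R s g| ≤ normR R s * normR R g := ipR_CS R hR _ _
  have hz2 : normR R z * normR R z = ipR R z z := normR_sq R hR z
  rw [hgoal]
  rcases eq_or_lt_of_le (normR_nonneg R z) with h0 | h0
  · rw [← h0, mul_zero]; exact normR_nonneg R g
  · have hle : normR R z * normR R z ≤ normR R s * normR R g := by
      rw [hz2, ← hkey]
      exact le_trans (le_abs_self _) hcs
    nlinarith [normR_nonneg R g, normR_nonneg R s]
end Dual

/-- Error bound for the sketched primal-dual correction
`s_r^{spd} = ⟨l,u_r⟩ - ⟨Θ u_r^du, Θ R⁻¹ r(u_r)⟩`. -/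
theorem sketched_primal_dual_correction {n k : ℕ} (R A : Matrix (Fin n) (Fin n) ℝ)
    (hR : R.PosDef) (hA : IsUnit A.det) (Θ : Matrix (Fin k) (Fin n) ℝ)
    (b l u udu urp urd : Fin n → ℝ)
    (hu : A.mulVec u = b) (hdu : Aᵀ.mulVec udu = -l)
    (ε η : ℝ) (hε0 : 0 ≤ ε) (hη : 0 < η)
    (hηmin : ∀ x : Fin n → ℝ, η * normR R x ≤ normDual R (A.mulVec x))
    (hemb : ∀ x ∈ Submodule.span ℝ {urd, R⁻¹.mulVec (b - A.mulVec urp)},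
      ∀ y ∈ Submodule.span ℝ {urd, R⁻¹.mulVec (b - A.mulVec urp)},
      |ipR R x y - (Θ.mulVec x) ⬝ᵥ (Θ.mulVec y)| ≤ ε * normR R x * normR R y) :
    |l ⬝ᵥ u -
        (l ⬝ᵥ urp - (Θ.mulVec urd) ⬝ᵥ (Θ.mulVec (R⁻¹.mulVec (b - A.mulVec urp))))| ≤
      (normDual R (b - A.mulVec urp) / η) *
        ((1 + ε) * normDual R (-l - Aᵀ.mulVec urd) + ε * normDual R l) := by
  set r : Fin n → ℝ := b - A *ᵥ urp with hr
  set rdu : Fin n → ℝ := -l - Aᵀ *ᵥ urd with hrdu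
  set g : Fin n → ℝ := R⁻¹ *ᵥ r with hgdef
  set e : Fin n → ℝ := u - urp with he
  set S : ℝ := (Θ *ᵥ urd) ⬝ᵥ (Θ *ᵥ g) with hS
  have hAe : A *ᵥ e = r := by rw [he, mulVec_sub, hu, hr]
  -- ⟨Aᵀ v, w⟩ = ⟨v, A w⟩
  have hAT : ∀ v w : Fin n → ℝ, (Aᵀ *ᵥ v) ⬝ᵥ w = v ⬝ᵥ (A *ᵥ w) := by
    intro v w
    rw [mulVec_transpose, ← dotProduct_mulVec]
  -- step 2 : l ⬝ᵥ e = -(udu ⬝ᵥ r)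
  have h2 : l ⬝ᵥ e = -(udu ⬝ᵥ r) := by
    have h := hAT udu e
    rw [hdu, hAe, neg_dotProduct] at h
    linarith
  -- step 3 : rdu ⬝ᵥ e = udu ⬝ᵥ r - urd ⬝ᵥ r
  have h3 : rdu ⬝ᵥ e = udu ⬝ᵥ r - urd ⬝ᵥ r := by
    have h := hAT (udu - urd) e
    rw [hAe, mulVec_sub, hdu] at h
    rw [hrdu, h, sub_dotProduct]
  -- step 4 : urd ⬝ᵥ r = ipR R g urd, so urd ⬝ᵥ r = ipR R urd g
  have h4 : urd ⬝ᵥ r = ipR R urd g := by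
    have h := pairing R hR r urd
    rw [← hgdef] at h
    rw [dotProduct_comm, h, ipR_comm R hR.isHermitian]
  -- error decomposition
  have hE : l ⬝ᵥ u - (l ⬝ᵥ urp - S) = -((rdu ⬝ᵥ e) + (ipR R urd g - S)) := by
    have hsub : l ⬝ᵥ u - l ⬝ᵥ urp = l ⬝ᵥ e := by rw [he, dotProduct_sub]
    linarith
  -- membership in the span
  have hmem1 : urd ∈ Submodule.span ℝ ({urd, g} : Set (Fin n → ℝ)) :=
    Submodule.subset_span (Set.mem_insert _ _)
  have hmem2 : g ∈ Submodule.span ℝ ({urd, g} : Set (Fin n → ℝ)) :=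
    Submodule.subset_span (Set.mem_insert_of_mem _ rfl)
  have hembb : |ipR R urd g - S| ≤ ε * normR R urd * normR R g :=
    hemb urd hmem1 g hmem2
  -- bounds
  have hb1 : |rdu ⬝ᵥ e| ≤ normDual R rdu * normR R e := pairing_bound R hR _ _
  have hbe : η * normR R e ≤ normDual R r := by
    have h := hηmin e
    rwa [hAe] at h
  have hg_eq : normR R g = normDual R r := (normDual_eq R hR r).symm
  -- bound on ‖urd‖ via the transpose bound
  have hurd : η * normR R urd ≤ normDual R rdu + normDual R l := by
    have h := transpose_min_bound R hR A hA hη hηmin urd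
    have hATurd : Aᵀ *ᵥ urd = -rdu + -l := by rw [hrdu]; abel
    rw [hATurd] at h
    calc η * normR R urd ≤ normDual R (-rdu + -l) := h
      _ ≤ normDual R (-rdu) + normDual R (-l) := normDual_add_le R hR _ _
      _ = normDual R rdu + normDual R l := by
          rw [normDual_neg R hR, normDual_neg R hR]
  -- assemble
  rw [hE, abs_neg]
  have habs : |(rdu ⬝ᵥ e) + (ipR R urd g - S)| ≤ |rdu ⬝ᵥ e| + |ipR R urd g - S| :=
    abs_add_le _ _
  have hDnn : 0 ≤ normDual R rdu := normDual_nonneg R _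
  have hLnn : 0 ≤ normDual R l := normDual_nonneg R _
  have hrnn : 0 ≤ normDual R r := normDual_nonneg R _
  have hennn : 0 ≤ normR R e := normR_nonneg R _
  have hunn : 0 ≤ normR R urd := normR_nonneg R _
  have t1 : normDual R rdu * normR R e ≤ normDual R rdu * (normDual R r / η) := by
    apply mul_le_mul_of_nonneg_left _ hDnn
    rw [le_div_iff₀ hη]
    linarith [hbe]
  have t2 : ε * normR R urd * normR R g ≤
      ε * ((normDual R rdu + normDual R l) / η) * normDual R r := by
    rw [hg_eq]
    apply mul_le_mul_of_nonneg_right _ hrnn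
    apply mul_le_mul_of_nonneg_left _ hε0
    rw [le_div_iff₀ hη]
    linarith [hurd]
  have hrhs : (normDual R r / η) *
      ((1 + ε) * normDual R rdu + ε * normDual R l)
      = normDual R rdu * (normDual R r / η)
        + ε * ((normDual R rdu + normDual R l) / η) * normDual R r := by
    field_simp
    ring
  rw [hrhs]
  calc |(rdu ⬝ᵥ e) + (ipR R urd g - S)| ≤ |rdu ⬝ᵥ e| + |ipR R urd g - S| := habs
    _ ≤ normDual R rdu * normR R e + ε * normR R urd * normR R g := by
        linarith [hb1, hembb]
    _ ≤ _ := by linarith [t1, t2]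
end
end
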